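/- Let q be a polynomial of degree (n,m) in two complex variables. If there exists c > 0 such that |q(z,w)|^2 - |q̃(z,w)|^2 ≥ c(1-|z|^2)(1-|w|^2) for all (z,w) in the closed bidisk, then q has no zeros in the closed bidisk. -/

import Mathlib

open ComplexConjugate

/-- Evaluation of a two-variable polynomial of bidegree at most `(n, m)`
given by its coefficient array `a`. -/
noncomputable def evalP (n m : ℕ) (a : ℕ → ℕ → ℂ) (z w : ℂ) : ℂ :=
  ∑ j ∈ Finset.range (n + 1), ∑ k ∈ Finset.range (m + 1), a j k * z ^ j * w ^ k

/-- The reflection at bidegree `(n,m)`: coefficients are reversed and conjugated. -/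
noncomputable def reflP (n m : ℕ) (a : ℕ → ℕ → ℂ) (z w : ℂ) : ℂ :=
  evalP n m (fun j k => conj (a (n - j) (m - k))) z w

/-- If `|q|² - |q̃|² ≥ c(1-|z|²)(1-|w|²)` on the closed bidisk for some `c > 0`,
then `q` has no zeros in the closed bidisk. -/
private lemma hasDerivAt_term (b z w : ℂ) (j k : ℕ) :
    HasDerivAt (fun t : ℝ => b * ((t:ℂ)*z)^j * ((t:ℂ)*w)^k)
      (b * z^j * w^k * ((j:ℂ)+k)) 1 := by
  have h1 : (fun t : ℝ => b * ((t:ℂ)*z)^j * ((t:ℂ)*w)^k)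
      = fun t : ℝ => (b * z^j * w^k) * (t:ℂ)^(j+k) := by
    funext t; ring
  have h2 : HasDerivAt (fun ζ : ℂ => (b * z^j * w^k) * ζ^(j+k))
      ((b * z^j * w^k) * (((j+k : ℕ):ℂ) * (((1:ℝ):ℂ))^(j+k-1))) ((1:ℝ):ℂ) :=
    (hasDerivAt_pow (j+k) ((1:ℝ):ℂ)).const_mul (b * z^j * w^k)
  have h3 := h2.comp_ofReal
  rw [h1]
  convert h3 using 1
  push_cast
  ring

private lemma hasDerivAt_evalP (n m : ℕ) (b : ℕ → ℕ → ℂ) (z w : ℂ) :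
    HasDerivAt (fun t : ℝ => evalP n m b ((t:ℂ)*z) ((t:ℂ)*w))
      (∑ j ∈ Finset.range (n+1), ∑ k ∈ Finset.range (m+1),
        b j k * z^j * w^k * ((j:ℂ)+k)) 1 := by
  unfold evalP
  exact HasDerivAt.fun_sum fun j _ => HasDerivAt.fun_sum fun k _ => hasDerivAt_term _ _ _ _ _

private lemma tendsto_abs_div {f : ℝ → ℂ} {D : ℂ}
    (hf : HasDerivAt f D 1) (h0 : f 1 = 0) :
    Filter.Tendsto (fun t => ‖f t‖ / (1 - t))
      (nhdsWithin 1 (Set.Iio 1)) (nhds (‖D‖)) := by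
  have hs : Filter.Tendsto (slope f 1) (nhdsWithin 1 {(1:ℝ)}ᶜ) (nhds D) :=
    hasDerivAt_iff_tendsto_slope.1 hf
  have hs' : Filter.Tendsto (slope f 1) (nhdsWithin 1 (Set.Iio 1)) (nhds D) :=
    hs.mono_left (nhdsWithin_mono _ (fun x hx => ne_of_lt hx))
  have h2 := (continuous_norm.tendsto D).comp hs'
  refine h2.congr' ?_
  filter_upwards [self_mem_nhdsWithin] with t ht
  have ht1 : t < 1 := ht
  have : slope f 1 t = (t - 1)⁻¹ • f t := by
    rw [slope]; simp [h0, vsub_eq_sub]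
  simp only [Function.comp, this]
  rw [show ((t - 1)⁻¹ • f t : ℂ) = ((t-1)⁻¹ : ℝ) • f t from rfl,
    norm_smul]
  simp only [norm_inv, Real.norm_eq_abs, abs_of_neg (by linarith : t - 1 < 0)]
  rw [div_eq_inv_mul, neg_sub]

private lemma refl_deriv_rel (n m : ℕ) (a : ℕ → ℕ → ℂ) (z w : ℂ)
    (hz : ‖z‖ = 1) (hw : ‖w‖ = 1) :
    (∑ j ∈ Finset.range (n+1), ∑ k ∈ Finset.range (m+1),
        conj (a (n-j) (m-k)) * z^j * w^k * ((j:ℂ)+k))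
      + z^n * w^m * conj (∑ j ∈ Finset.range (n+1), ∑ k ∈ Finset.range (m+1),
        a j k * z^j * w^k * ((j:ℂ)+k))
      = ((n:ℂ)+m) * reflP n m a z w := by
  have hz1 : z * conj z = 1 := by
    rw [Complex.mul_conj]
    norm_cast
    rw [Complex.normSq_eq_norm_sq, hz, one_pow]
  have hw1 : w * conj w = 1 := by
    rw [Complex.mul_conj]
    norm_cast
    rw [Complex.normSq_eq_norm_sq, hw, one_pow]
  have key : z^n * w^m * conj (∑ j ∈ Finset.range (n+1), ∑ k ∈ Finset.range (m+1),
        a j k * z^j * w^k * ((j:ℂ)+k))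
      = ∑ j ∈ Finset.range (n+1), ∑ k ∈ Finset.range (m+1),
        conj (a (n-j) (m-k)) * z^j * w^k * (((n:ℂ)+m) - ((j:ℂ)+k)) := by
    rw [map_sum, Finset.mul_sum]
    rw [← Finset.sum_range_reflect]
    refine Finset.sum_congr rfl (fun j hj => ?_)
    rw [map_sum, Finset.mul_sum, ← Finset.sum_range_reflect]
    refine Finset.sum_congr rfl (fun k hk => ?_)
    have hj' : j ≤ n := by
      simp only [Finset.mem_range] at hj; omega
    have hk' : k ≤ m := by
      simp only [Finset.mem_range] at hk; omega
    have h1 : n + 1 - 1 - j = n - j := by omega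
    have h2 : m + 1 - 1 - k = m - k := by omega
    rw [h1, h2]
    simp only [map_mul, map_pow, map_add, Complex.conj_natCast]
    have hnj : n - (n - j) = j := by omega
    have hmk : m - (m - k) = k := by omega
    have hzp : z ^ n * (conj z) ^ (n - j) = z ^ j := by
      have : z ^ n = z ^ j * z ^ (n - j) := by rw [← pow_add]; congr 1; omega
      rw [this, mul_assoc, ← mul_pow, hz1, one_pow, mul_one]
    have hwp : w ^ m * (conj w) ^ (m - k) = w ^ k := by
      have : w ^ m = w ^ k * w ^ (m - k) := by rw [← pow_add]; congr 1; omega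
      rw [this, mul_assoc, ← mul_pow, hw1, one_pow, mul_one]
    have hcast : ((n - j : ℕ) : ℂ) + ((m - k : ℕ) : ℂ) = ((n:ℂ)+m) - ((j:ℂ)+k) := by
      push_cast [Nat.cast_sub hj', Nat.cast_sub hk']
      ring
    calc z ^ n * w ^ m * (conj (a (n-j) (m-k)) * (conj z)^(n-j) * (conj w)^(m-k)
          * (((n-j : ℕ):ℂ) + ((m-k : ℕ):ℂ)))
        = conj (a (n-j) (m-k)) * (z ^ n * (conj z)^(n-j)) * (w ^ m * (conj w)^(m-k))
          * (((n-j : ℕ):ℂ) + ((m-k : ℕ):ℂ)) := by ring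
      _ = conj (a (n-j) (m-k)) * z^j * w^k * (((n:ℂ)+m) - ((j:ℂ)+k)) := by
          rw [hzp, hwp, hcast]
  rw [key, reflP, evalP, ← Finset.sum_add_distrib, Finset.mul_sum]
  refine Finset.sum_congr rfl (fun j _ => ?_)
  rw [← Finset.sum_add_distrib, Finset.mul_sum]
  refine Finset.sum_congr rfl (fun k _ => ?_)
  ring


theorem stmt_3 (n m : ℕ) (a : ℕ → ℕ → ℂ) (c : ℝ) (hc : 0 < c)
    (h : ∀ z w : ℂ, ‖z‖ ≤ 1 → ‖w‖ ≤ 1 →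
      c * ((1 - ‖z‖ ^ 2) * (1 - ‖w‖ ^ 2)) ≤
        ‖evalP n m a z w‖ ^ 2 - ‖reflP n m a z w‖ ^ 2) :
    ∀ z w : ℂ, ‖z‖ ≤ 1 → ‖w‖ ≤ 1 → evalP n m a z w ≠ 0 := by
  intro z w hz hw hq0
  have hznn := norm_nonneg z
  have hwnn := norm_nonneg w
  have h0 := h z w hz hw
  rw [hq0, norm_zero] at h0
  have hprodnn : 0 ≤ (1 - ‖z‖ ^ 2) * (1 - ‖w‖ ^ 2) :=
    mul_nonneg (by nlinarith) (by nlinarith)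
  have hreflsq : ‖reflP n m a z w‖ ^ 2 ≤ 0 := by nlinarith
  have hrefl0 : reflP n m a z w = 0 := by
    have h1 := sq_nonneg (‖reflP n m a z w‖)
    have h2 : ‖reflP n m a z w‖ = 0 := by nlinarith [norm_nonneg (reflP n m a z w)]
    exact norm_eq_zero.mp h2
  have hprod0 : (1 - ‖z‖ ^ 2) * (1 - ‖w‖ ^ 2) = 0 := by nlinarith
  -- setup of the scaled functions
  set f : ℝ → ℂ := fun t : ℝ => evalP n m a ((t:ℂ)*z) ((t:ℂ)*w) with hfdef
  set g : ℝ → ℂ := fun t : ℝ =>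
    evalP n m (fun j k => conj (a (n-j) (m-k))) ((t:ℂ)*z) ((t:ℂ)*w) with hgdef
  set Df : ℂ := ∑ j ∈ Finset.range (n+1), ∑ k ∈ Finset.range (m+1),
        a j k * z^j * w^k * ((j:ℂ)+k) with hDfdef
  set Dg : ℂ := ∑ j ∈ Finset.range (n+1), ∑ k ∈ Finset.range (m+1),
        conj (a (n-j) (m-k)) * z^j * w^k * ((j:ℂ)+k) with hDgdef
  have hf : HasDerivAt f Df 1 := hasDerivAt_evalP n m a z w
  have hg : HasDerivAt g Dg 1 := hasDerivAt_evalP n m _ z w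
  have hf1 : f 1 = 0 := by
    show evalP n m a (((1:ℝ):ℂ)*z) (((1:ℝ):ℂ)*w) = 0
    rw [Complex.ofReal_one, one_mul, one_mul, hq0]
  have hg1 : g 1 = 0 := by
    show evalP n m _ (((1:ℝ):ℂ)*z) (((1:ℝ):ℂ)*w) = 0
    rw [Complex.ofReal_one, one_mul, one_mul]
    exact hrefl0
  have hAf := tendsto_abs_div hf hf1
  have hBg := tendsto_abs_div hg hg1
  have hIoo : Set.Ioo (0:ℝ) 1 ∈ nhdsWithin 1 (Set.Iio 1) :=
    Ioo_mem_nhdsLT_of_mem (by constructor <;> norm_num)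
  have hIn : ∀ t : ℝ, t ∈ Set.Ioo (0:ℝ) 1 →
      c * ((1 - t^2 * ‖z‖ ^ 2) * (1 - t^2 * ‖w‖ ^ 2)) ≤
        ‖f t‖ ^ 2 - ‖g t‖ ^ 2 := by
    intro t ht
    have ht0 : (0:ℝ) < t := ht.1
    have ht1 : t < 1 := ht.2
    have habz : ‖(t:ℂ)*z‖ = t * ‖z‖ := by
      rw [norm_mul, Complex.norm_of_nonneg ht0.le]
    have habw : ‖(t:ℂ)*w‖ = t * ‖w‖ := by
      rw [norm_mul, Complex.norm_of_nonneg ht0.le]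
    have hb1 : ‖(t:ℂ)*z‖ ≤ 1 := by
      rw [habz]; nlinarith
    have hb2 : ‖(t:ℂ)*w‖ ≤ 1 := by
      rw [habw]; nlinarith
    have := h ((t:ℂ)*z) ((t:ℂ)*w) hb1 hb2
    rw [habz, habw, mul_pow, mul_pow] at this
    exact this
  -- which boundary?
  rcases mul_eq_zero.mp hprod0 with hz0 | hw0
  · -- |z| = 1
    have hz1 : ‖z‖ = 1 := by nlinarith
    by_cases hw1 : ‖w‖ = 1
    · -- torus case
      have hDgDf : ‖Dg‖ = ‖Df‖ := by
        have hrel := refl_deriv_rel n m a z w hz1 hw1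
        rw [hrefl0, mul_zero] at hrel
        have : Dg = -(z^n * w^m * conj Df) := by linear_combination hrel
        rw [this, norm_neg, norm_mul, norm_mul, norm_pow, norm_pow, hz1, hw1,
          Complex.norm_conj, one_pow, one_pow, one_mul, one_mul]
      have hev : ∀ᶠ t in nhdsWithin 1 (Set.Iio 1),
          c * (1+t)^2 ≤ (‖f t‖ / (1-t))^2 - (‖g t‖ / (1-t))^2 := by
        filter_upwards [hIoo] with t ht
        have ht1 : t < 1 := ht.2
        have h1t : (0:ℝ) < 1 - t := by linarith
        have hineq := hIn t ht
        rw [hz1, hw1] at hineq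
        rw [div_pow, div_pow, div_sub_div_same, le_div_iff₀ (by positivity)]
        calc c * (1+t)^2 * (1-t)^2
            = c * ((1 - t^2 * 1^2) * (1 - t^2 * 1^2)) := by ring
          _ ≤ ‖f t‖ ^ 2 - ‖g t‖ ^ 2 := hineq
      have hL : Filter.Tendsto (fun t : ℝ => c * (1+t)^2) (nhdsWithin 1 (Set.Iio 1))
          (nhds (c * 4)) := by
        have h1 : Filter.Tendsto (fun t : ℝ => c * (1+t)^2) (nhds 1) (nhds (c * (1+1)^2)) :=
          (continuous_const.mul ((continuous_const.add continuous_id).pow 2)).tendsto 1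
        have h2 := h1.mono_left (nhdsWithin_le_nhds (s := Set.Iio 1))
        have h3 : c * ((1:ℝ)+1)^2 = c * 4 := by ring
        rwa [h3] at h2
      have hR : Filter.Tendsto
          (fun t : ℝ => (‖f t‖ / (1-t))^2 - (‖g t‖ / (1-t))^2)
          (nhdsWithin 1 (Set.Iio 1)) (nhds 0) := by
        have := (hAf.pow 2).sub (hBg.pow 2)
        rw [hDgDf, sub_self] at this
        exact this
      have hfinal : c * 4 ≤ 0 := le_of_tendsto_of_tendsto hL hR hev
      linarith
    · -- |w| < 1
      have hwlt : ‖w‖ < 1 := lt_of_le_of_ne hw hw1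
      have hw2 : ‖w‖ ^ 2 < 1 := by nlinarith
      have hev : ∀ᶠ t in nhdsWithin 1 (Set.Iio 1),
          c * ((1+t) * (1 - t^2 * ‖w‖ ^ 2)) ≤
            (1-t) * (‖f t‖ / (1-t))^2 := by
        filter_upwards [hIoo] with t ht
        have ht1 : t < 1 := ht.2
        have h1t : (0:ℝ) < 1 - t := by linarith
        have hineq := hIn t ht
        rw [hz1] at hineq
        have hg2 := sq_nonneg (‖g t‖)
        have heq : (1-t) * (‖f t‖ / (1-t))^2
            = ‖f t‖^2 / (1-t) := by
          rw [div_pow]; field_simp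
        rw [heq, le_div_iff₀ h1t]
        calc c * ((1+t) * (1 - t^2 * ‖w‖ ^ 2)) * (1-t)
            = c * ((1 - t^2 * 1^2) * (1 - t^2 * ‖w‖ ^ 2)) := by ring
          _ ≤ ‖f t‖ ^ 2 - ‖g t‖ ^ 2 := hineq
          _ ≤ ‖f t‖ ^ 2 := by linarith
      have hL : Filter.Tendsto
          (fun t : ℝ => c * ((1+t) * (1 - t^2 * ‖w‖ ^ 2)))
          (nhdsWithin 1 (Set.Iio 1)) (nhds (c * (2 * (1 - ‖w‖ ^ 2)))) := by
        have h1 : Filter.Tendsto (fun t : ℝ => c * ((1+t) * (1 - t^2 * ‖w‖ ^ 2)))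
            (nhds 1) (nhds (c * ((1+1) * (1 - 1^2 * ‖w‖ ^ 2)))) := by
          apply Filter.Tendsto.const_mul
          exact ((continuous_const.add continuous_id).mul
            (continuous_const.sub ((continuous_id.pow 2).mul continuous_const))).tendsto 1
        have h2 := h1.mono_left (nhdsWithin_le_nhds (s := Set.Iio 1))
        have h3 : c * ((1+1) * (1 - 1^2 * ‖w‖ ^ 2))
            = c * (2 * (1 - ‖w‖ ^ 2)) := by ring
        rwa [h3] at h2
      have hR : Filter.Tendsto
          (fun t : ℝ => (1-t) * (‖f t‖ / (1-t))^2)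
          (nhdsWithin 1 (Set.Iio 1)) (nhds 0) := by
        have h1 : Filter.Tendsto (fun t : ℝ => 1 - t) (nhdsWithin 1 (Set.Iio 1)) (nhds 0) := by
          have h0' : Filter.Tendsto (fun t : ℝ => 1 - t) (nhds 1) (nhds ((1:ℝ)-1)) :=
            (continuous_const.sub continuous_id).tendsto 1
          rw [show (1:ℝ) - 1 = 0 by norm_num] at h0'
          exact h0'.mono_left nhdsWithin_le_nhds
        have h2 := h1.mul (hAf.pow 2)
        rwa [zero_mul] at h2
      have hfinal := le_of_tendsto_of_tendsto hL hR hev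
      nlinarith
  · -- |w| = 1
    have hw1 : ‖w‖ = 1 := by nlinarith
    by_cases hz1 : ‖z‖ = 1
    · -- torus case (same as above)
      have hDgDf : ‖Dg‖ = ‖Df‖ := by
        have hrel := refl_deriv_rel n m a z w hz1 hw1
        rw [hrefl0, mul_zero] at hrel
        have : Dg = -(z^n * w^m * conj Df) := by linear_combination hrel
        rw [this, norm_neg, norm_mul, norm_mul, norm_pow, norm_pow, hz1, hw1,
          Complex.norm_conj, one_pow, one_pow, one_mul, one_mul]
      have hev : ∀ᶠ t in nhdsWithin 1 (Set.Iio 1),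
          c * (1+t)^2 ≤ (‖f t‖ / (1-t))^2 - (‖g t‖ / (1-t))^2 := by
        filter_upwards [hIoo] with t ht
        have ht1 : t < 1 := ht.2
        have h1t : (0:ℝ) < 1 - t := by linarith
        have hineq := hIn t ht
        rw [hz1, hw1] at hineq
        rw [div_pow, div_pow, div_sub_div_same, le_div_iff₀ (by positivity)]
        calc c * (1+t)^2 * (1-t)^2
            = c * ((1 - t^2 * 1^2) * (1 - t^2 * 1^2)) := by ring
          _ ≤ ‖f t‖ ^ 2 - ‖g t‖ ^ 2 := hineq
      have hL : Filter.Tendsto (fun t : ℝ => c * (1+t)^2) (nhdsWithin 1 (Set.Iio 1))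
          (nhds (c * 4)) := by
        have h1 : Filter.Tendsto (fun t : ℝ => c * (1+t)^2) (nhds 1) (nhds (c * (1+1)^2)) :=
          (continuous_const.mul ((continuous_const.add continuous_id).pow 2)).tendsto 1
        have h2 := h1.mono_left (nhdsWithin_le_nhds (s := Set.Iio 1))
        have h3 : c * ((1:ℝ)+1)^2 = c * 4 := by ring
        rwa [h3] at h2
      have hR : Filter.Tendsto
          (fun t : ℝ => (‖f t‖ / (1-t))^2 - (‖g t‖ / (1-t))^2)
          (nhdsWithin 1 (Set.Iio 1)) (nhds 0) := by
        have := (hAf.pow 2).sub (hBg.pow 2)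
        rw [hDgDf, sub_self] at this
        exact this
      have hfinal : c * 4 ≤ 0 := le_of_tendsto_of_tendsto hL hR hev
      linarith
    · -- |z| < 1
      have hzlt : ‖z‖ < 1 := lt_of_le_of_ne hz hz1
      have hz2 : ‖z‖ ^ 2 < 1 := by nlinarith
      have hev : ∀ᶠ t in nhdsWithin 1 (Set.Iio 1),
          c * ((1 - t^2 * ‖z‖ ^ 2) * (1+t)) ≤
            (1-t) * (‖f t‖ / (1-t))^2 := by
        filter_upwards [hIoo] with t ht
        have ht1 : t < 1 := ht.2
        have h1t : (0:ℝ) < 1 - t := by linarith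
        have hineq := hIn t ht
        rw [hw1] at hineq
        have hg2 := sq_nonneg (‖g t‖)
        have heq : (1-t) * (‖f t‖ / (1-t))^2
            = ‖f t‖^2 / (1-t) := by
          rw [div_pow]; field_simp
        rw [heq, le_div_iff₀ h1t]
        calc c * ((1 - t^2 * ‖z‖ ^ 2) * (1+t)) * (1-t)
            = c * ((1 - t^2 * ‖z‖ ^ 2) * (1 - t^2 * 1^2)) := by ring
          _ ≤ ‖f t‖ ^ 2 - ‖g t‖ ^ 2 := hineq
          _ ≤ ‖f t‖ ^ 2 := by linarith
      have hL : Filter.Tendsto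
          (fun t : ℝ => c * ((1 - t^2 * ‖z‖ ^ 2) * (1+t)))
          (nhdsWithin 1 (Set.Iio 1)) (nhds (c * ((1 - ‖z‖ ^ 2) * 2))) := by
        have h1 : Filter.Tendsto (fun t : ℝ => c * ((1 - t^2 * ‖z‖ ^ 2) * (1+t)))
            (nhds 1) (nhds (c * ((1 - 1^2 * ‖z‖ ^ 2) * (1+1)))) := by
          apply Filter.Tendsto.const_mul
          exact ((continuous_const.sub ((continuous_id.pow 2).mul continuous_const)).mul
            (continuous_const.add continuous_id)).tendsto 1
        have h2 := h1.mono_left (nhdsWithin_le_nhds (s := Set.Iio 1))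
        have h3 : c * ((1 - 1^2 * ‖z‖ ^ 2) * (1+1))
            = c * ((1 - ‖z‖ ^ 2) * 2) := by ring
        rwa [h3] at h2
      have hR : Filter.Tendsto
          (fun t : ℝ => (1-t) * (‖f t‖ / (1-t))^2)
          (nhdsWithin 1 (Set.Iio 1)) (nhds 0) := by
        have h1 : Filter.Tendsto (fun t : ℝ => 1 - t) (nhdsWithin 1 (Set.Iio 1)) (nhds 0) := by
          have h0' : Filter.Tendsto (fun t : ℝ => 1 - t) (nhds 1) (nhds ((1:ℝ)-1)) :=
            (continuous_const.sub continuous_id).tendsto 1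
          rw [show (1:ℝ) - 1 = 0 by norm_num] at h0'
          exact h0'.mono_left nhdsWithin_le_nhds
        have h2 := h1.mul (hAf.pow 2)
        rwa [zero_mul] at h2
      have hfinal := le_of_tendsto_of_tendsto hL hR hev
      nlinarith
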